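/- Let L_1 : ℤ[x^{±1}, q^{±1}] → ℤ[q^{±1/1}] be the ℤ[q^{±1}]-linear map sending x^a to q^{-a²}. Then for every nonnegative integer k, L_1((x;q)_{k+1}(x^{-1};q)_{k+1}) = 2·(-1)^{k+1}·q^{-(k+1)(k+2)/2}·(q^{k+1};q)_{k+1}. -/

import Mathlib

open LaurentPolynomial Finset

/-- The ring `ℤ[q^{±1}]` of Laurent polynomials in `q`. -/
noncomputable abbrev Rq := LaurentPolynomial ℤ

/-- The `ℤ[q^{±1}]`-linear "Laplace transform" on `ℤ[x^{±1}, q^{±1}]`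
(modeled as Laurent polynomials in `x` over `ℤ[q^{±1}]`), sending the monomial
`x^a` to `g a ∈ ℤ[q^{±1}]`. -/
noncomputable def Lap (g : ℤ → Rq) (f : LaurentPolynomial Rq) : Rq :=
  Finsupp.sum f.coeff fun a c => c * g a

namespace L42

noncomputable def g1 : ℤ → Rq := fun a => T (-a ^ 2)
noncomputable def uu : Rq := T 1
noncomputable def vv : Rq := T (-1)
noncomputable def ww (k : ℕ) : Rq := T (k : ℤ)
noncomputable def F (n : ℤ) : LaurentPolynomial Rq := 1 - T 1 * C (T n)
noncomputable def G (n : ℤ) : LaurentPolynomial Rq := 1 - T (-1) * C (T n)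
noncomputable def P (k : ℕ) : LaurentPolynomial Rq :=
  (∏ i ∈ range (k+1), F (i : ℤ)) * ∏ i ∈ range (k+1), G (i : ℤ)
noncomputable def B (k : ℕ) (j : ℤ) : Rq := Lap g1 (T j * P k)
noncomputable def SP (k : ℕ) : LaurentPolynomial Rq :=
  (∏ i ∈ range (k+1), F ((i : ℤ) + 2)) * ∏ i ∈ range (k+1), G ((i : ℤ) - 2)

/-! ### basic unit relations -/

theorem Tnz (n : ℤ) : (T n : Rq) ≠ 0 := by
  intro h
  have h1 : ((T n : Rq)).coeff n = 1 := by simp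
  rw [h] at h1
  simp at h1

theorem hUV : uu * vv = 1 := by
  unfold uu vv; rw [← T_add]; norm_num [T_zero]

theorem hWZ (k : ℕ) : ww k * (T (-(k:ℤ)) : Rq) = 1 := by
  unfold ww; rw [← T_add]; norm_num [T_zero]

theorem hXY : (T 1 : LaurentPolynomial Rq) * T (-1) = 1 := by
  rw [← T_add]; norm_num [T_zero]

theorem hab : (C uu : LaurentPolynomial Rq) * C vv = 1 := by
  rw [← map_mul, hUV, map_one]

theorem hu2 : (uu : Rq)^2 = T 2 := by unfold uu; rw [T_pow]; norm_num
theorem hu4 : (uu : Rq)^4 = T 4 := by unfold uu; rw [T_pow]; norm_num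
theorem hu6 : (uu : Rq)^6 = T 6 := by unfold uu; rw [T_pow]; norm_num
theorem hv2 : (vv : Rq)^2 = T (-2) := by unfold vv; rw [T_pow]; norm_num
theorem hv4 : (vv : Rq)^4 = T (-4) := by unfold vv; rw [T_pow]; norm_num
theorem hv9 : (vv : Rq)^9 = T (-9) := by unfold vv; rw [T_pow]; norm_num
theorem hv3 : (vv : Rq)^3 = T (-3) := by unfold vv; rw [T_pow]; norm_num
theorem hu3 : (uu : Rq)^3 = T 3 := by unfold uu; rw [T_pow]; norm_num
theorem hu5 : (uu : Rq)^5 = T 5 := by unfold uu; rw [T_pow]; norm_num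

/-! ### Lap basics -/

theorem Lap_add (g : ℤ → Rq) (f h : LaurentPolynomial Rq) :
    Lap g (f + h) = Lap g f + Lap g h := by
  unfold Lap; rw [AddMonoidAlgebra.coeff_add]; exact Finsupp.sum_add_index (by simp) (by intros; ring)

theorem Lap_zero (g : ℤ → Rq) : Lap g 0 = 0 := by
  unfold Lap; rw [AddMonoidAlgebra.coeff_zero]; exact Finsupp.sum_zero_index

theorem Lap_CT (g : ℤ → Rq) (c : Rq) (n : ℤ) : Lap g (C c * T n) = c * g n := by
  rw [← single_eq_C_mul_T]
  unfold Lap; rw [AddMonoidAlgebra.coeff_single]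
  exact Finsupp.sum_single_index (by simp)

theorem Lap_sub (g : ℤ → Rq) (f h : LaurentPolynomial Rq) :
    Lap g (f - h) = Lap g f - Lap g h := by
  have := Lap_add g (f - h) h
  rw [sub_add_cancel] at this
  linear_combination -this

theorem Lap_Cmul (g : ℤ → Rq) (c : Rq) (f : LaurentPolynomial Rq) :
    Lap g (C c * f) = c * Lap g f := by
  induction f using AddMonoidAlgebra.induction_linear with
  | zero => rw [mul_zero, Lap_zero]; ring
  | add f h hf hh => rw [mul_add, Lap_add, Lap_add, hf, hh, mul_add]
  | single n r =>
      rw [single_eq_C_mul_T, ← mul_assoc, ← map_mul, Lap_CT, Lap_CT]; ring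

/-! ### the substitution x ↦ q²x and inversion -/

noncomputable def phiS : Multiplicative ℤ →* LaurentPolynomial Rq where
  toFun a := C (T (2 * a.toAdd)) * T a.toAdd
  map_one' := by simp [T_zero]
  map_mul' a b := by
    simp only [toAdd_mul]
    rw [show 2 * (a.toAdd + b.toAdd) = 2 * a.toAdd + 2 * b.toAdd by ring, T_add, map_mul, T_add]
    ring

noncomputable def S : LaurentPolynomial Rq →ₐ[Rq] LaurentPolynomial Rq :=
  AddMonoidAlgebra.lift Rq (LaurentPolynomial Rq) ℤ phiS

theorem S_T (a : ℤ) : S (T a) = C (T (2 * a)) * T a := by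
  have h : (T a : LaurentPolynomial Rq) = AddMonoidAlgebra.single a 1 := rfl
  rw [h, S, AddMonoidAlgebra.lift_single]
  simp [phiS]

theorem S_C (c : Rq) : S (C c) = C c := by
  rw [C_eq_algebraMap, AlgHom.commutes]

theorem S_CT (c : Rq) (a : ℤ) : S (C c * T a) = C (c * T (2 * a)) * T a := by
  rw [map_mul, S_C, S_T, map_mul]; ring

theorem Lap_shift (f : LaurentPolynomial Rq) :
    Lap g1 (T 1 * S f) = T (-1) * Lap g1 f := by
  induction f using AddMonoidAlgebra.induction_linear with
  | zero => simp [map_zero, Lap_zero]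
  | add f h hf hh => rw [map_add, mul_add, Lap_add, Lap_add, hf, hh, mul_add]
  | single n r =>
      rw [single_eq_C_mul_T, S_CT,
        show (T 1 : LaurentPolynomial Rq) * (C (r * T (2 * n)) * T n)
          = C (r * T (2 * n)) * T (n + 1) by rw [T_add]; ring,
        Lap_CT, Lap_CT]
      show r * T (2 * n) * T (-(n + 1) ^ 2) = T (-1) * (r * T (-n ^ 2))
      rw [mul_assoc, ← T_add, show 2 * n + -(n + 1) ^ 2 = -n ^ 2 + -1 by ring, T_add]
      ring

theorem Lap_invert (f : LaurentPolynomial Rq) : Lap g1 (invert f) = Lap g1 f := by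
  induction f using AddMonoidAlgebra.induction_linear with
  | zero => rw [map_zero]
  | add f h hf hh => rw [map_add, Lap_add, Lap_add, hf, hh]
  | single n r =>
      rw [single_eq_C_mul_T, map_mul, invert_C, invert_T, Lap_CT, Lap_CT]
      show r * T (-(-n) ^ 2) = r * T (-n ^ 2)
      rw [show (-(-n) ^ 2 : ℤ) = -n ^ 2 by ring]

theorem invert_F (n : ℤ) : invert (F n) = G n := by
  unfold F G; rw [map_sub, map_one, map_mul, invert_T, invert_C]

theorem invert_G (n : ℤ) : invert (G n) = F n := by
  unfold F G; rw [map_sub, map_one, map_mul, invert_T, invert_C, neg_neg]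

theorem invert_P (k : ℕ) : invert (P k) = P k := by
  unfold P
  rw [map_mul, map_prod, map_prod]
  simp only [invert_F, invert_G]
  ring

theorem B_neg (k : ℕ) (j : ℤ) : B k (-j) = B k j := by
  unfold B
  rw [← Lap_invert (T j * P k), map_mul, invert_T, invert_P]

theorem S_P (k : ℕ) : S (P k) = SP k := by
  unfold P SP
  rw [map_mul, map_prod, map_prod]
  congr 1
  · refine prod_congr rfl fun i _ => ?_
    unfold F
    rw [map_sub, map_one, map_mul, S_T, S_C,
      show ((i : ℤ) + 2) = 2 * 1 + i by ring, T_add, map_mul]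
    ring
  · refine prod_congr rfl fun i _ => ?_
    unfold G
    rw [map_sub, map_one, map_mul, S_T, S_C,
      show ((i : ℤ) - 2) = 2 * (-1) + i by ring, T_add, map_mul]
    ring

theorem Lap_T_SP (k : ℕ) (j : ℤ) :
    Lap g1 (T j * SP k) = T (-1) * (T (2 - 2 * j) * B k (j - 1)) := by
  have h1 : (T j : LaurentPolynomial Rq) * SP k
      = T 1 * S (C (T (2 - 2 * j)) * (T (j - 1) * P k)) := by
    rw [map_mul, S_C, map_mul, S_T, S_P]
    rw [show (T 1 : LaurentPolynomial Rq) *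
        (C (T (2 - 2 * j)) * (C (T (2 * (j - 1))) * T (j - 1) * SP k))
        = (C (T (2 - 2 * j)) * C (T (2 * (j - 1)))) * ((T 1 * T (j - 1)) * SP k) by ring,
      ← map_mul, ← T_add, show (2 - 2 * j) + 2 * (j - 1) = 0 by ring, T_zero, map_one,
      ← T_add, show (1 : ℤ) + (j - 1) = j by ring, one_mul]
  rw [h1, Lap_shift, Lap_Cmul]
  rfl


/-! ### product reindexing and the key functional equation -/

theorem rx (H : ℤ → LaurentPolynomial Rq) (c : ℤ) (m : ℕ) :
    (∏ i ∈ range m, H ((i : ℤ) + c + 1)) * H c = ∏ i ∈ range (m + 1), H ((i : ℤ) + c) := by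
  rw [prod_range_succ']
  congr 1
  · exact prod_congr rfl fun i _ => congrArg H (by push_cast; ring)
  · exact congrArg H (by norm_num)

theorem chainF (k : ℕ) : (∏ i ∈ range (k+1), F ((i:ℤ)+2)) * (F 1 * F 0)
    = (∏ i ∈ range (k+1), F (i:ℤ)) * (F ((k:ℤ)+1) * F ((k:ℤ)+2)) := by
  have h1 := rx F 1 (k+1)
  have h0 := rx F 0 (k+2)
  have n1 : ∏ i ∈ range (k+1), F ((i:ℤ)+1+1) = ∏ i ∈ range (k+1), F ((i:ℤ)+2) :=
    prod_congr rfl fun i _ => congrArg F (by ring)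
  have n2 : ∏ i ∈ range (k+2), F ((i:ℤ)+0+1) = ∏ i ∈ range (k+2), F ((i:ℤ)+1) :=
    prod_congr rfl fun i _ => congrArg F (by ring)
  have n3 : ∏ i ∈ range (k+3), F ((i:ℤ)+0) = ∏ i ∈ range (k+3), F (i:ℤ) :=
    prod_congr rfl fun i _ => congrArg F (by ring)
  rw [n1] at h1; rw [n2, n3] at h0
  simp only [show k+1+1 = k+2 from rfl] at h1
  have t1 : ∏ i ∈ range (k+3), F (i:ℤ) = (∏ i ∈ range (k+1), F (i:ℤ)) * F ((k:ℤ)+1) * F ((k:ℤ)+2) := by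
    rw [prod_range_succ, prod_range_succ,
      show ((((k:ℕ)+1):ℕ):ℤ) = (k:ℤ) + 1 by push_cast; ring,
      show ((((k:ℕ)+2):ℕ):ℤ) = (k:ℤ) + 2 by push_cast; ring]
  rw [t1] at h0
  linear_combination h0 + F 0 * h1

theorem chainG (k : ℕ) : (∏ i ∈ range (k+1), G ((i:ℤ)-2)) * (G ((k:ℤ)-1) * G (k:ℤ))
    = (∏ i ∈ range (k+1), G (i:ℤ)) * (G (-1) * G (-2)) := by
  have h2 := rx G (-2) (k+2)
  have h1 := rx G (-1) (k+1)
  have n1 : ∏ i ∈ range (k+2), G ((i:ℤ)+(-2)+1) = ∏ i ∈ range (k+2), G ((i:ℤ)-1) :=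
    prod_congr rfl fun i _ => congrArg G (by ring)
  have n2 : ∏ i ∈ range (k+3), G ((i:ℤ)+(-2)) = ∏ i ∈ range (k+3), G ((i:ℤ)-2) :=
    prod_congr rfl fun i _ => congrArg G (by ring)
  have n3 : ∏ i ∈ range (k+1), G ((i:ℤ)+(-1)+1) = ∏ i ∈ range (k+1), G (i:ℤ) :=
    prod_congr rfl fun i _ => congrArg G (by ring)
  have n4 : ∏ i ∈ range (k+2), G ((i:ℤ)+(-1)) = ∏ i ∈ range (k+2), G ((i:ℤ)-1) :=
    prod_congr rfl fun i _ => congrArg G (by ring)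
  rw [n1, n2] at h2; rw [n3, n4] at h1
  have t1 : ∏ i ∈ range (k+3), G ((i:ℤ)-2) = (∏ i ∈ range (k+1), G ((i:ℤ)-2)) * G ((k:ℤ)-1) * G (k:ℤ) := by
    rw [prod_range_succ, prod_range_succ,
      show ((((k:ℕ)+1):ℕ):ℤ) - 2 = (k:ℤ) - 1 by push_cast; ring,
      show ((((k:ℕ)+2):ℕ):ℤ) - 2 = (k:ℤ) by push_cast; ring]
  rw [t1] at h2
  linear_combination -h2 - G (-2) * h1

theorem dagger (k : ℕ) :
    SP k * (F 0 * F 1 * G ((k:ℤ)-1) * G (k:ℤ))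
      = P k * (F ((k:ℤ)+1) * F ((k:ℤ)+2) * G (-1) * G (-2)) := by
  have hF := chainF k
  have hG := chainG k
  unfold SP P
  linear_combination ((∏ i ∈ range (k+1), G ((i:ℤ)-2)) * (G ((k:ℤ)-1) * G (k:ℤ))) * hF
    + ((∏ i ∈ range (k+1), F (i:ℤ)) * (F ((k:ℤ)+1) * F ((k:ℤ)+2))) * hG

/-! ### generic expansions of the boundary factors -/

theorem genW {R : Type*} [CommRing R] (X Y a b c : R) (hxy : X*Y = 1) (hab2 : a*b = 1) :
    (1-X)*(1-X*a)*(1-Y*(c*b))*(1-Y*c) =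
      a*(X*X) - (1+a+c+c*a)*X + (1+c*b+2*c+c*a+c*c) - (c*b+c+c*c*b+c*c)*Y + (c*c*b)*(Y*Y) := by
  linear_combination (c + b*c + a*c + a*b*c + a*b*c^2 - Y*b*c^2 - Y*a*b*c^2 - X*a*c - X*a*b*c
    + X*Y*a*b*c^2) * hxy + (c + c^2 - Y*c^2 - X*c) * hab2

theorem genV {R : Type*} [CommRing R] (X Y a b c : R) (hxy : X*Y = 1) (hab2 : a*b = 1) :
    (1-X*(c*a))*(1-X*(c*a*a))*(1-Y*(b*b))*(1-Y*b) =
      (c*c*a*a*a)*(X*X) - (c*a+c*a*a+c*c*a+c*c*a*a)*X + (1+c*b+2*c+c*a+c*c)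
        - (b*b+b+c*b*b+c*b)*Y + (b*b*b)*(Y*Y) := by
  linear_combination (a*b*c + a*b^2*c + a^2*b*c + a^2*b^2*c + a^3*b^3*c^2 - Y*a*b^3*c
    - Y*a^2*b^3*c - X*a^3*b*c^2 - X*a^3*b^2*c^2 + X*Y*a^3*b^3*c^2) * hxy
    + (2*c + c^2 + b*c + a*c + a*b*c + a*b*c^2 + a^2*b^2*c^2 - Y*b*c - Y*b^2*c - Y*a*b^2*c
    - X*a*c^2 - X*a^2*c^2 - X*a^2*b*c^2) * hab2


/-! ### factor normal forms -/

theorem hF0 : F 0 = 1 - T 1 := by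
  unfold F; rw [T_zero, map_one, mul_one]

theorem hF1 : F 1 = 1 - T 1 * C uu := rfl

theorem hGk1 (k : ℕ) : G ((k:ℤ)-1) = 1 - T (-1) * (C (ww k) * C vv) := by
  unfold G ww vv; rw [T_sub, map_mul]

theorem hGk (k : ℕ) : G (k:ℤ) = 1 - T (-1) * C (ww k) := rfl

theorem hFk1 (k : ℕ) : F ((k:ℤ)+1) = 1 - T 1 * (C (ww k) * C uu) := by
  unfold F ww uu; rw [T_add, map_mul]

theorem hFk2 (k : ℕ) : F ((k:ℤ)+2) = 1 - T 1 * (C (ww k) * C uu * C uu) := by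
  unfold F ww uu
  rw [show ((k:ℤ)+2) = (k + 1) + 1 by ring, T_add, T_add, map_mul, map_mul]

theorem hGm1 : G (-1) = 1 - T (-1) * C vv := rfl

theorem hGm2 : G (-2) = 1 - T (-1) * (C vv * C vv) := by
  unfold G vv
  rw [show (-2 : ℤ) = -1 + -1 by norm_num, T_add, map_mul]

theorem T2XX : (T 2 : LaurentPolynomial Rq) = T 1 * T 1 := by
  rw [← T_add]; norm_num

theorem Tm2YY : (T (-2) : LaurentPolynomial Rq) = T (-1) * T (-1) := by
  rw [← T_add]; norm_num

/-! ### the relation R0 -/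

theorem relR0c (k : ℕ) :
    (2*uu + uu*ww k + uu^2 + uu^2*ww k + uu^3*ww k + uu^4 + 3*uu^4*ww k + 2*uu^4*(ww k)^2
      + 2*uu^5*ww k + uu^5*(ww k)^2) * B k 1 + uu^7*(ww k)^2 * B k 3
    = (uu^2 + 2*uu^2*ww k + 2*uu^3 + 3*uu^3*ww k + uu^3*(ww k)^2 + uu^4*ww k) * B k 0
      + (1 + uu^5*ww k + uu^5*(ww k)^2 + uu^6*ww k + 2*uu^6*(ww k)^2) * B k 2 := by
  have hW := genW (T 1 : LaurentPolynomial Rq) (T (-1)) (C uu) (C vv) (C (ww k)) hXY hab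
  have hV := genV (T 1 : LaurentPolynomial Rq) (T (-1)) (C uu) (C vv) (C (ww k)) hXY hab
  have hd := dagger k
  have eW : SP k * (F 0 * F 1 * G ((k:ℤ)-1) * G (k:ℤ))
      = C uu * (T 2 * SP k) - C (1 + uu + ww k + ww k*uu) * (T 1 * SP k)
        + C (1 + ww k*vv + 2*ww k + ww k*uu + ww k*ww k) * (T 0 * SP k)
        - C (ww k*vv + ww k + ww k*ww k*vv + ww k*ww k) * (T (-1) * SP k)
        + C (ww k*ww k*vv) * (T (-2) * SP k) := by
    rw [hF0, hF1, hGk1, hGk, T2XX, Tm2YY, T_zero]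
    simp only [map_add, map_mul, map_one, map_ofNat]
    linear_combination (SP k) * hW
  have eV : P k * (F ((k:ℤ)+1) * F ((k:ℤ)+2) * G (-1) * G (-2))
      = C (ww k*ww k*uu*uu*uu) * (T 2 * P k)
        - C (ww k*uu + ww k*uu*uu + ww k*ww k*uu + ww k*ww k*uu*uu) * (T 1 * P k)
        + C (1 + ww k*vv + 2*ww k + ww k*uu + ww k*ww k) * (T 0 * P k)
        - C (vv*vv + vv + ww k*vv*vv + ww k*vv) * (T (-1) * P k)
        + C (vv*vv*vv) * (T (-2) * P k) := by
    rw [hFk1, hFk2, hGm1, hGm2, T2XX, Tm2YY, T_zero]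
    simp only [map_add, map_mul, map_one, map_ofNat]
    linear_combination (P k) * hV
  rw [eW, eV] at hd
  have raw := congrArg (Lap g1) hd
  simp only [Lap_sub, Lap_add, Lap_Cmul, Lap_T_SP] at raw
  have LB : ∀ j : ℤ, Lap g1 (T j * P k) = B k j := fun _ => rfl
  simp only [LB] at raw
  norm_num at raw
  rw [show B k (-1) = B k 1 from B_neg k 1, show B k (-2) = B k 2 from B_neg k 2,
    show B k (-3) = B k 3 from B_neg k 3] at raw
  rw [show (T (-1) : Rq) = vv from rfl, show (T 1 : Rq) = uu from rfl,
    ← hv3, ← hu3, ← hu5] at raw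
  linear_combination (uu^3) * raw +
    ((B k 2) - 2*uu*(B k 1) - uu*ww k*(B k 1) + uu*vv*(B k 2) - uu^2*(B k 1) + uu^2*(B k 0)
      - uu^2*ww k*(B k 1) + 2*uu^2*ww k*(B k 0) - 2*uu^2*vv*(B k 1) - uu^2*vv*ww k*(B k 1)
      + uu^2*vv^2*(B k 2) + uu^3*(B k 0) - uu^3*ww k*(B k 1) + uu^3*ww k*(B k 0)
      - uu^3*vv^2*(B k 1) + uu^5*ww k*(B k 2) + uu^5*(ww k)^2*(B k 2)
      - uu^7*(ww k)^2*(B k 3)) * hUV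


/-! ### recurrence in k -/

theorem Brec (k : ℕ) (j : ℤ) :
    B (k+1) j = (1 + (ww k*uu)*(ww k*uu)) * B k j
      - (ww k*uu) * (B k (j+1) + B k (j-1)) := by
  have hP : P (k+1) = P k * (F ((k:ℤ)+1) * G ((k:ℤ)+1)) := by
    unfold P
    rw [prod_range_succ (f := fun i => F (i:ℤ)), prod_range_succ (f := fun i => G (i:ℤ)),
      show ((((k:ℕ)+1):ℕ):ℤ) = (k:ℤ)+1 by push_cast; ring]
    ring
  have hGk1' : G ((k:ℤ)+1) = 1 - T (-1) * (C (ww k) * C uu) := by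
    unfold G ww uu; rw [T_add, map_mul]
  have hFG : F ((k:ℤ)+1) * G ((k:ℤ)+1)
      = 1 + C (ww k*uu) * C (ww k*uu) - C (ww k*uu) * T 1 - C (ww k*uu) * T (-1) := by
    rw [hFk1, hGk1']
    simp only [map_mul]
    linear_combination (C (ww k) * C uu * (C (ww k) * C uu)) * hXY
  have e : (T j : LaurentPolynomial Rq) * P (k+1)
      = C (1 + (ww k*uu)*(ww k*uu)) * (T j * P k)
        - C (ww k*uu) * (T (j+1) * P k) - C (ww k*uu) * (T (j-1) * P k) := by
    rw [hP, hFG, show (T (j+1) : LaurentPolynomial Rq) = T j * T 1 from T_add j 1,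
      show (T (j-1) : LaurentPolynomial Rq) = T j * T (-1) from T_sub j 1]
    simp only [map_add, map_mul, map_one]
    ring
  show Lap g1 (T j * P (k+1)) = _
  rw [e, Lap_sub, Lap_sub, Lap_Cmul, Lap_Cmul, Lap_Cmul]
  have LB : ∀ i : ℤ, Lap g1 (T i * P k) = B k i := fun _ => rfl
  rw [LB, LB, LB]
  ring

/-! ### the induction step, as a pure ring identity -/

theorem stepCore {R : Type*} [CommRing R] (u w B0 B1 B2 B3 B0' B1' B2' : R)
    (hr0 : (2*u + u*w + u^2 + u^2*w + u^3*w + u^4 + 3*u^4*w + 2*u^4*w^2 + 2*u^5*w + u^5*w^2) * B1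
        + u^7*w^2 * B3
      = (u^2 + 2*u^2*w + 2*u^3 + 3*u^3*w + u^3*w^2 + u^4*w) * B0
        + (1 + u^5*w + u^5*w^2 + u^6*w + 2*u^6*w^2) * B2)
    (h1 : 2*(w^2*u^3)*B1 = (1 + w*u + w*u^2 - w^2*u^3)*B0)
    (h2 : 2*(w^4*u^8)*B2 = (1 + w*u + w*u^2 + w*u^3 + w*u^4 + w^2*u^4 + w^2*u^6
        - w^3*u^4 - w^3*u^5 - w^3*u^6 - w^3*u^7 - w^4*u^6)*B0)
    (e0 : B0' = (1 + (w*u)*(w*u))*B0 - (w*u)*(B1+B1))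
    (e1 : B1' = (1 + (w*u)*(w*u))*B1 - (w*u)*(B2+B0))
    (e2 : B2' = (1 + (w*u)*(w*u))*B2 - (w*u)*(B3+B1)) :
    (u^2*w) * (2*((w*u)^2*u^3)*B1') = (u^2*w) * ((1 + (w*u)*u + (w*u)*u^2 - (w*u)^2*u^3)*B0')
    ∧ (u^2*w) * (2*((w*u)^4*u^8)*B2')
      = (u^2*w) * ((1 + (w*u)*u + (w*u)*u^2 + (w*u)*u^3 + (w*u)*u^4 + (w*u)^2*u^4 + (w*u)^2*u^6
        - (w*u)^3*u^4 - (w*u)^3*u^5 - (w*u)^3*u^6 - (w*u)^3*u^7 - (w*u)^4*u^6)*B0') := by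
  constructor
  · rw [e0, e1]
    linear_combination (1 + u^2*w + u^3*w + u^4*w - u^5*w^2 + u^6*w^3) * h1 + (-1 : R) * h2
  · rw [e0, e2]
    linear_combination (-2*u^8*w^4) * hr0
      + (1 + u^2*w + u^3*w + u^4*w + u^5*w + 3*u^6*w^2 + u^6*w^3 + u^7*w^2 + u^8*w^2 + u^9*w^2
        + 2*u^9*w^3 + 2*u^9*w^4 + u^10*w^3 - u^12*w^4) * h1
      + (-1 - u^5*w - u^5*w^2 - 2*u^6*w^2 + u^8*w^3) * h2


/-! ### base case values -/

theorem em0 (j : ℤ) : (T j : LaurentPolynomial Rq) * P 0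
    = C 2 * T j - C 1 * T (j+1) - C 1 * T (j-1) := by
  unfold P
  rw [prod_range_one, prod_range_one, show (((0:ℕ)):ℤ) = 0 from rfl]
  unfold F G
  simp only [T_zero, map_one, mul_one]
  rw [show (T (j+1) : LaurentPolynomial Rq) = T j * T 1 from T_add j 1,
    show (T (j-1) : LaurentPolynomial Rq) = T j * T (-1) from T_sub j 1,
    show (C 2 : LaurentPolynomial Rq) = 2 from map_ofNat C 2]
  linear_combination (T j : LaurentPolynomial Rq) * hXY

theorem eb0 (j : ℤ) : B 0 j = 2 * T (-j^2) - T (-(j+1)^2) - T (-(j-1)^2) := by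
  show Lap g1 (T j * P 0) = _
  rw [em0, Lap_sub, Lap_sub, Lap_CT, Lap_CT, Lap_CT]
  show 2 * g1 j - 1 * g1 (j+1) - 1 * g1 (j-1) = _
  unfold g1
  ring

theorem hB00 : B 0 0 = 2 - 2*vv := by
  have h := eb0 0
  norm_num [T_zero] at h
  rw [show (T (-1) : Rq) = vv from rfl] at h
  linear_combination h

theorem hB01 : B 0 1 = 2*vv - vv^4 - 1 := by
  have h := eb0 1
  norm_num [T_zero] at h
  rw [← hv4, show (T (-1) : Rq) = vv from rfl] at h
  linear_combination h

theorem hB02 : B 0 2 = 2*vv^4 - vv^9 - vv := by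
  have h := eb0 2
  norm_num [T_zero] at h
  rw [← hv4, ← hv9, show (T (-1) : Rq) = vv from rfl] at h
  linear_combination h

/-! ### the two closed-form relations, by induction -/

theorem HH (k : ℕ) :
    2*((ww k)^2*uu^3)*B k 1 = (1 + ww k*uu + ww k*uu^2 - (ww k)^2*uu^3)*B k 0
    ∧ 2*((ww k)^4*uu^8)*B k 2 = (1 + ww k*uu + ww k*uu^2 + ww k*uu^3 + ww k*uu^4
        + (ww k)^2*uu^4 + (ww k)^2*uu^6 - (ww k)^3*uu^4 - (ww k)^3*uu^5 - (ww k)^3*uu^6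
        - (ww k)^3*uu^7 - (ww k)^4*uu^6)*B k 0 := by
  induction k with
  | zero =>
      have hw0 : ww 0 = 1 := by unfold ww; norm_num [T_zero]
      constructor
      · rw [hw0, hB00, hB01]
        linear_combination (2 - 2*vv + 2*uu - 2*uu*vv^2 + 2*uu^2 - 2*uu^2*vv^3) * hUV
      · rw [hw0, hB00, hB02]
        linear_combination (2 - 2*vv + 2*uu - 2*uu*vv^2 + 2*uu^2 - 2*uu^2*vv^3 + 2*uu^3
          - 2*uu^3*vv^4 + 2*uu^4 - 2*uu^4*vv^5 - 2*uu^5 + 4*uu^5*vv - 2*uu^5*vv^6 - 2*uu^6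
          + 4*uu^6*vv^2 - 2*uu^6*vv^7 - 2*uu^7 + 4*uu^7*vv^3 - 2*uu^7*vv^8) * hUV
  | succ k ih =>
      have hw' : ww (k+1) = ww k * uu := by
        unfold ww uu
        rw [show (((k+1:ℕ)):ℤ) = (k:ℤ)+1 by push_cast; ring, T_add]
      have e0 : B (k+1) 0 = (1 + (ww k*uu)*(ww k*uu))*B k 0 - (ww k*uu)*(B k 1 + B k 1) := by
        have h := Brec k 0
        rwa [show (0:ℤ)+1 = 1 by norm_num, show (0:ℤ)-1 = -1 by norm_num, B_neg k 1] at h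
      have e1 : B (k+1) 1 = (1 + (ww k*uu)*(ww k*uu))*B k 1 - (ww k*uu)*(B k 2 + B k 0) := by
        have h := Brec k 1
        rwa [show (1:ℤ)+1 = 2 by norm_num, show (1:ℤ)-1 = 0 by norm_num] at h
      have e2 : B (k+1) 2 = (1 + (ww k*uu)*(ww k*uu))*B k 2 - (ww k*uu)*(B k 3 + B k 1) := by
        have h := Brec k 2
        rwa [show (2:ℤ)+1 = 3 by norm_num, show (2:ℤ)-1 = 1 by norm_num] at h
      have hs := stepCore uu (ww k) (B k 0) (B k 1) (B k 2) (B k 3)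
        (B (k+1) 0) (B (k+1) 1) (B (k+1) 2) (relR0c k) ih.1 ih.2 e0 e1 e2
      have hM : (uu^2 * ww k : Rq) ≠ 0 := by
        have h : (uu^2 * ww k : Rq) = T (2 + (k:ℤ)) := by
          unfold uu ww; rw [T_pow, ← T_add]; norm_num
        rw [h]; exact Tnz _
      constructor
      · rw [hw']; exact mul_left_cancel₀ hM hs.1
      · rw [hw']; exact mul_left_cancel₀ hM hs.2

/-! ### the right-hand side -/

noncomputable def RHSv (k : ℕ) : Rq :=
  2 * (-1) ^ (k + 1) * T (-(((k : ℤ) + 1) * ((k : ℤ) + 2) / 2)) *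
    ∏ j ∈ range (k + 1), (1 - T ((k : ℤ) + 1 + (j : ℤ)))

theorem mainB (k : ℕ) : B k 0 = RHSv k := by
  induction k with
  | zero =>
      rw [hB00]
      unfold RHSv
      rw [prod_range_one]
      norm_num
      rw [show (T (-1) : Rq) = vv from rfl, show (T 1 : Rq) = uu from rfl]
      linear_combination (-2 : Rq) * hUV
  | succ k ih =>
      have h1 := (HH k).1
      have e0 : B (k+1) 0 = (1 + (ww k*uu)*(ww k*uu))*B k 0 - (ww k*uu)*(B k 1 + B k 1) := by
        have h := Brec k 0
        rwa [show (0:ℤ)+1 = 1 by norm_num, show (0:ℤ)-1 = -1 by norm_num, B_neg k 1] at h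
      have key : (ww k)^2*uu^3 * B (k+1) 0
          = ((ww k)^2*uu^3*(1+(ww k)^2*uu^2) - ww k*uu*(1+ww k*uu+ww k*uu^2-(ww k)^2*uu^3))
            * B k 0 := by
        rw [e0]
        linear_combination (-(ww k*uu)) * h1
      have c1 : (((k+1:ℕ)):ℤ) = (k:ℤ)+1 := by push_cast; ring
      obtain ⟨m, hm⟩ : (2:ℤ) ∣ ((k:ℤ)+1)*((k:ℤ)+2) := by
        rw [show ((k:ℤ)+1)*((k:ℤ)+2) = ((k:ℤ)+1)*(((k:ℤ)+1)+1) by ring]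
        exact (Int.even_mul_succ_self ((k:ℤ)+1)).two_dvd
      have hEk : ((k:ℤ)+1)*((k:ℤ)+2)/2 = m := by
        rw [hm]; exact Int.mul_ediv_cancel_left m two_ne_zero
      have hEk1 : (((k:ℤ)+1)+1)*(((k:ℤ)+1)+2)/2 = m + ((k:ℤ)+2) := by
        rw [show (((k:ℤ)+1)+1)*(((k:ℤ)+1)+2) = 2*(m + ((k:ℤ)+2)) by linear_combination hm]
        exact Int.mul_ediv_cancel_left _ two_ne_zero
      have hTE : (T (-((((k:ℤ)+1)+1)*(((k:ℤ)+1)+2)/2)) : Rq)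
          = T (-(((k:ℤ)+1)*((k:ℤ)+2)/2)) * (T (-(k:ℤ)) * (vv*vv)) := by
        rw [hEk1, hEk, show (-(m + ((k:ℤ)+2))) = -m + (-(k:ℤ) + (-1 + -1)) by ring,
          T_add, T_add, T_add]
        rfl
      have hwu : (T ((k:ℤ)+1) : Rq) = ww k * uu := by unfold ww uu; rw [T_add]
      have hw2u2 : (T (2*(k:ℤ)+2) : Rq) = (ww k)^2*uu^2 := by
        unfold ww uu
        rw [T_pow, T_pow, ← T_add]
        norm_num
      have hw2u3 : (T (2*(k:ℤ)+3) : Rq) = (ww k)^2*uu^3 := by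
        unfold ww uu
        rw [T_pow, T_pow, ← T_add]
        norm_num
      have hP1 : ∏ j ∈ range (k+1), (1 - (T ((k:ℤ)+1+(j:ℤ)) : Rq))
          = (1 - ww k*uu) * ∏ j ∈ range k, (1 - (T ((k:ℤ)+2+(j:ℤ)) : Rq)) := by
        rw [prod_range_succ']
        rw [show (∏ j ∈ range k, (1 - (T ((k:ℤ)+1+((j+1:ℕ):ℤ)) : Rq)))
            = ∏ j ∈ range k, (1 - (T ((k:ℤ)+2+(j:ℤ)) : Rq)) from
          prod_congr rfl fun j _ => congrArg (fun n => 1 - (T n : Rq)) (by push_cast; ring),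
          show ((k:ℤ)+1+(((0:ℕ)):ℤ)) = (k:ℤ)+1 by norm_num, hwu]
        ring
      have hP2 : ∏ j ∈ range (k+1+1), (1 - (T (((k:ℤ)+1)+1+(j:ℤ)) : Rq))
          = (∏ j ∈ range k, (1 - (T ((k:ℤ)+2+(j:ℤ)) : Rq)))
            * (1 - (ww k)^2*uu^2) * (1 - (ww k)^2*uu^3) := by
        rw [prod_range_succ, prod_range_succ]
        rw [show (∏ j ∈ range k, (1 - (T (((k:ℤ)+1)+1+(j:ℤ)) : Rq)))
            = ∏ j ∈ range k, (1 - (T ((k:ℤ)+2+(j:ℤ)) : Rq)) from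
          prod_congr rfl fun j _ => congrArg (fun n => 1 - (T n : Rq)) (by push_cast; ring),
          show (((k:ℤ)+1)+1+((k:ℕ):ℤ)) = 2*(k:ℤ)+2 by push_cast; ring,
          show (((k:ℤ)+1)+1+(((k+1:ℕ)):ℤ)) = 2*(k:ℤ)+3 by push_cast; ring,
          hw2u2, hw2u3]
      have hRHS0 : RHSv k = 2 * (-1)^(k+1) * T (-(((k:ℤ)+1)*((k:ℤ)+2)/2))
          * ((1 - ww k*uu) * ∏ j ∈ range k, (1 - (T ((k:ℤ)+2+(j:ℤ)) : Rq))) := by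
        unfold RHSv
        rw [hP1]
      have hRHS1 : RHSv (k+1) = 2 * ((-1)^(k+1) * (-1))
          * (T (-(((k:ℤ)+1)*((k:ℤ)+2)/2)) * (T (-(k:ℤ)) * (vv*vv)))
          * ((∏ j ∈ range k, (1 - (T ((k:ℤ)+2+(j:ℤ)) : Rq)))
            * (1 - (ww k)^2*uu^2) * (1 - (ww k)^2*uu^3)) := by
        unfold RHSv
        rw [pow_succ ((-1 : Rq)) (k+1), c1, hTE, hP2]
      have hR : (ww k)^2*uu^3 * RHSv (k+1)
          = ((ww k)^2*uu^3*(1+(ww k)^2*uu^2) - ww k*uu*(1+ww k*uu+ww k*uu^2-(ww k)^2*uu^3))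
            * RHSv k := by
        rw [hRHS0, hRHS1]
        linear_combination
          (((-2)*uu*(ww k)^2 - 2*uu^2*vv*(ww k)^2 + 2*uu^3*(ww k)^4 + 2*uu^4*(ww k)^4
              + 2*uu^4*vv*(ww k)^4 + 2*uu^5*vv*(ww k)^4 - 2*uu^6*(ww k)^6
              - 2*uu^7*vv*(ww k)^6)
            * ((T (-(k:ℤ)) : Rq) * T (-(((k:ℤ)+1)*((k:ℤ)+2)/2))
              * (∏ j ∈ range k, (1 - (T ((k:ℤ)+2+(j:ℤ)) : Rq))) * (-1:Rq)^(k+1))) * hUV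
          + (((-2)*uu*(ww k) + 2*uu^3*(ww k)^3 + 2*uu^4*(ww k)^3 - 2*uu^6*(ww k)^5)
            * ((T (-(((k:ℤ)+1)*((k:ℤ)+2)/2)) : Rq)
              * (∏ j ∈ range k, (1 - (T ((k:ℤ)+2+(j:ℤ)) : Rq))) * (-1:Rq)^(k+1))) * (hWZ k)
      have hM : ((ww k)^2*uu^3 : Rq) ≠ 0 := by
        rw [← hw2u3]; exact Tnz _
      apply mul_left_cancel₀ hM
      rw [key, ih, hR]

end L42

/-- Lemma 4.2 (second formula): with `L_1 : x^a ↦ q^{-a²}`,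
`L_1((x;q)_{k+1}(x^{-1};q)_{k+1}) = 2 (-1)^{k+1} q^{-(k+1)(k+2)/2} (q^{k+1};q)_{k+1}`. -/
theorem laplace_one (k : ℕ) :
    Lap (fun a => T (-a ^ 2))
        ((∏ i ∈ Finset.range (k + 1), (1 - T 1 * C (T (i : ℤ)))) *
          ∏ i ∈ Finset.range (k + 1), (1 - T (-1) * C (T (i : ℤ)))) =
      2 * (-1) ^ (k + 1) * T (-(((k : ℤ) + 1) * ((k : ℤ) + 2) / 2)) *
        ∏ j ∈ Finset.range (k + 1), (1 - T ((k : ℤ) + 1 + j)) := by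
  have h := L42.mainB k
  have e : (T (0:ℤ) : LaurentPolynomial Rq) * L42.P k = L42.P k := by
    rw [T_zero, one_mul]
  have hL : L42.B k 0
      = Lap (fun a => T (-a ^ 2))
        ((∏ i ∈ Finset.range (k + 1), (1 - T 1 * C (T (i : ℤ)))) *
          ∏ i ∈ Finset.range (k + 1), (1 - T (-1) * C (T (i : ℤ)))) := by
    show Lap L42.g1 (T 0 * L42.P k) = _
    rw [e]
    rfl
  rw [← hL, h]
  rfl
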